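/- arXiv:2008.03120 — 3 statements merged into one kernel-verified Lean document; each statement's English description precedes it below -/
import Mathlib

section
/- Let n ≥ 2, let Ω ⊂ ℝⁿ be a bounded open set, and let V₁, V₂ : ℝⁿ → ℂ be bounded measurable functions vanishing outside Ω. If ∫_Ω (V₁ − V₂)(x) u₁(x) u₂(x) dx = 0 for every pair u₁, u₂ of smooth complex-valued harmonic functions on ℝⁿ, then V₁ = V₂ almost everywhere in Ω. -/
open MeasureTheory

/-- The (pointwise) Laplacian of a function `u : ℝⁿ → ℂ`, as the sum of its second
partial derivatives in the coordinate directions. -/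
noncomputable def laplacian {n : ℕ} (u : EuclideanSpace ℝ (Fin n) → ℂ)
    (x : EuclideanSpace ℝ (Fin n)) : ℂ :=
  ∑ i : Fin n, fderiv ℝ (fun y => fderiv ℝ u y (EuclideanSpace.single i 1)) x
    (EuclideanSpace.single i 1)

/-- A smooth complex-valued function on `ℝⁿ` that is harmonic, i.e. `Δu = 0` everywhere. -/
def Harmonic {n : ℕ} (u : EuclideanSpace ℝ (Fin n) → ℂ) : Prop :=
  ContDiff ℝ (⊤ : ℕ∞) u ∧ ∀ x, laplacian u x = 0

namespace InvScat

variable {n : ℕ}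

/-- The ℝ-linear map `x ↦ ⟪p,x⟫ + ⟪q,x⟫ i`. -/
noncomputable def expChar (p q : EuclideanSpace ℝ (Fin n)) :
    EuclideanSpace ℝ (Fin n) →L[ℝ] ℂ :=
  Complex.ofRealCLM.comp (innerSL ℝ p) + Complex.I • Complex.ofRealCLM.comp (innerSL ℝ q)

lemma expChar_apply (p q x : EuclideanSpace ℝ (Fin n)) :
    expChar p q x = (inner ℝ p x : ℝ) + (inner ℝ q x : ℝ) * Complex.I := by
  simp [expChar, mul_comm]

lemma hasFDerivAt_expChar (p q : EuclideanSpace ℝ (Fin n)) (x : EuclideanSpace ℝ (Fin n)) :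
    HasFDerivAt (fun y => Complex.exp (expChar p q y))
      (Complex.exp (expChar p q x) • (expChar p q)) x :=
  (Complex.hasDerivAt_exp _).comp_hasFDerivAt x (expChar p q).hasFDerivAt

lemma fderiv_exp_expChar (p q : EuclideanSpace ℝ (Fin n)) (x v : EuclideanSpace ℝ (Fin n)) :
    fderiv ℝ (fun y => Complex.exp (expChar p q y)) x v
      = Complex.exp (expChar p q x) * expChar p q v := by
  rw [(hasFDerivAt_expChar p q x).fderiv]; rfl

lemma second_deriv_exp_expChar (p q : EuclideanSpace ℝ (Fin n))
    (x v : EuclideanSpace ℝ (Fin n)) :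
    fderiv ℝ (fun y => fderiv ℝ (fun z => Complex.exp (expChar p q z)) y v) x v
      = Complex.exp (expChar p q x) * expChar p q v * expChar p q v := by
  have h1 : (fun y => fderiv ℝ (fun z => Complex.exp (expChar p q z)) y v)
      = fun y => Complex.exp (expChar p q y) * expChar p q v := by
    funext y; exact fderiv_exp_expChar p q y v
  rw [h1]
  have h2 : HasFDerivAt (fun y => Complex.exp (expChar p q y) * expChar p q v)
      ((expChar p q v) • (Complex.exp (expChar p q x) • (expChar p q))) x :=
    (hasFDerivAt_expChar p q x).mul_const _
  rw [h2.fderiv]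
  simp [mul_comm, mul_assoc, mul_left_comm]

lemma harmonic_exp_expChar (p q : EuclideanSpace ℝ (Fin n))
    (hpq : (inner ℝ p q : ℝ) = 0) (hnorm : ‖p‖ = ‖q‖) :
    Harmonic (fun x => Complex.exp (expChar p q x)) := by
  constructor
  · exact Complex.contDiff_exp.comp (expChar p q).contDiff
  · intro x
    unfold laplacian
    have : ∀ i : Fin n, fderiv ℝ
        (fun y => fderiv ℝ (fun z => Complex.exp (expChar p q z)) y (EuclideanSpace.single i 1)) x
        (EuclideanSpace.single i 1)
        = Complex.exp (expChar p q x) * ((p i : ℂ) + (q i : ℂ) * Complex.I) ^ 2 := by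
      intro i
      rw [second_deriv_exp_expChar]
      have : expChar p q (EuclideanSpace.single i 1) = (p i : ℂ) + (q i : ℂ) * Complex.I := by
        rw [expChar_apply]
        simp [EuclideanSpace.inner_single_right]
      rw [this]; ring
    rw [Finset.sum_congr rfl (fun i _ => this i), ← Finset.mul_sum]
    have hsum : (∑ i : Fin n, ((p i : ℂ) + (q i : ℂ) * Complex.I) ^ 2) = 0 := by
      have hp : (∑ i : Fin n, (p i) * (p i)) = ‖p‖ ^ 2 := by
        rw [← real_inner_self_eq_norm_sq, PiLp.inner_apply]; simp [RCLike.inner_apply, mul_comm, sq]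
      have hq : (∑ i : Fin n, (q i) * (q i)) = ‖q‖ ^ 2 := by
        rw [← real_inner_self_eq_norm_sq, PiLp.inner_apply]; simp [RCLike.inner_apply, mul_comm, sq]
      have hpq' : (∑ i : Fin n, (p i) * (q i)) = 0 := by
        rw [← hpq, PiLp.inner_apply]; simp [RCLike.inner_apply, mul_comm]
      have : (∑ i : Fin n, ((p i : ℂ) + (q i : ℂ) * Complex.I) ^ 2)
          = ((∑ i : Fin n, (p i) * (p i) : ℝ) : ℂ) - ((∑ i : Fin n, (q i) * (q i) : ℝ) : ℂ)
            + 2 * ((∑ i : Fin n, (p i) * (q i) : ℝ) : ℂ) * Complex.I := by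
        have e1 : ∀ i ∈ Finset.univ, ((p i : ℂ) + (q i : ℂ) * Complex.I) ^ 2
            = ((p i : ℂ) * (p i) - (q i) * (q i)) + 2 * ((p i) * (q i)) * Complex.I := by
          intro i _; push_cast
          have : (Complex.I)^2 = -1 := Complex.I_sq
          ring_nf
          rw [this]; ring
        rw [Finset.sum_congr rfl e1, Finset.sum_add_distrib, Finset.sum_sub_distrib,
          ← Finset.sum_mul, ← Finset.mul_sum]
        push_cast
        ring
      rw [this, hp, hq, hpq', hnorm]
      push_cast
      ring
    rw [hsum, mul_zero]


lemma exists_orth (hn : 2 ≤ n) (ξ : EuclideanSpace ℝ (Fin n)) :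
    ∃ η : EuclideanSpace ℝ (Fin n), (inner ℝ η ξ : ℝ) = 0 ∧ ‖η‖ = ‖ξ‖ / 2 := by
  by_cases hξ : ξ = 0
  · exact ⟨0, by simp [hξ]⟩
  have h1 : Module.finrank ℝ (Submodule.span ℝ {ξ}) = 1 := finrank_span_singleton hξ
  have h2 : 0 < Module.finrank ℝ ((Submodule.span ℝ {ξ})ᗮ) := by
    have h3 := Submodule.finrank_add_finrank_orthogonal (𝕜 := ℝ) (Submodule.span ℝ {ξ})
    have hd : Module.finrank ℝ (EuclideanSpace ℝ (Fin n)) = n := finrank_euclideanSpace_fin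
    omega
  obtain ⟨v, hv0⟩ := Module.finrank_pos_iff_exists_ne_zero.mp h2
  have hvmem : (v : EuclideanSpace ℝ (Fin n)) ∈ (Submodule.span ℝ {ξ})ᗮ := v.2
  have hvne : (v : EuclideanSpace ℝ (Fin n)) ≠ 0 := fun h => hv0 (Subtype.ext h)
  have hinner : (inner ℝ (v : EuclideanSpace ℝ (Fin n)) ξ : ℝ) = 0 := by
    rw [real_inner_comm]
    exact (Submodule.mem_orthogonal _ _).mp hvmem ξ (Submodule.mem_span_singleton_self ξ)
  refine ⟨(‖ξ‖ / (2 * ‖(v : EuclideanSpace ℝ (Fin n))‖)) • (v : EuclideanSpace ℝ (Fin n)), ?_, ?_⟩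
  · rw [real_inner_smul_left, hinner, mul_zero]
  · rw [norm_smul]
    have hv : ‖(v : EuclideanSpace ℝ (Fin n))‖ ≠ 0 := norm_ne_zero_iff.mpr hvne
    rw [Real.norm_eq_abs, abs_div, abs_of_nonneg (norm_nonneg ξ), abs_of_nonneg (by positivity)]
    field_simp

/-- A smooth compactly supported function is a Schwartz map. -/
noncomputable def toSchwartz (g : EuclideanSpace ℝ (Fin n) → ℂ) (hg : ContDiff ℝ (⊤ : ℕ∞) g)
    (hsupp : HasCompactSupport g) : SchwartzMap (EuclideanSpace ℝ (Fin n)) ℂ where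
  toFun := g
  smooth' := hg
  decay' := by
    intro k m
    have hcont : Continuous fun x => ‖x‖ ^ k * ‖iteratedFDeriv ℝ m g x‖ :=
      (continuous_norm.pow k).mul (ContDiff.continuous_iteratedFDeriv (by exact_mod_cast le_top) hg).norm
    have hcs : HasCompactSupport fun x => ‖x‖ ^ k * ‖iteratedFDeriv ℝ m g x‖ :=
      (hsupp.iteratedFDeriv m).norm.mul_left
    obtain ⟨C, hC⟩ := hcs.exists_bound_of_continuous hcont
    exact ⟨C, fun x => (le_abs_self _).trans (hC x)⟩


end InvScat

set_option maxHeartbeats 2000000 in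
theorem stmt0 {n : ℕ} (hn : 2 ≤ n) (Ω : Set (EuclideanSpace ℝ (Fin n)))
    (hΩo : IsOpen Ω) (hΩb : Bornology.IsBounded Ω)
    (V₁ V₂ : EuclideanSpace ℝ (Fin n) → ℂ)
    (hV₁m : Measurable V₁) (hV₂m : Measurable V₂)
    (hV₁b : ∃ C, ∀ x, ‖V₁ x‖ ≤ C) (hV₂b : ∃ C, ∀ x, ‖V₂ x‖ ≤ C)
    (hV₁s : ∀ x ∉ Ω, V₁ x = 0) (hV₂s : ∀ x ∉ Ω, V₂ x = 0)
    (h : ∀ u₁ u₂ : EuclideanSpace ℝ (Fin n) → ℂ, Harmonic u₁ → Harmonic u₂ →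
      ∫ x in Ω, (V₁ x - V₂ x) * u₁ x * u₂ x = 0) :
    ∀ᵐ x ∂(volume.restrict Ω), V₁ x = V₂ x := by
  classical
  obtain ⟨C₁, hC₁⟩ := hV₁b
  obtain ⟨C₂, hC₂⟩ := hV₂b
  set W : EuclideanSpace ℝ (Fin n) → ℂ := fun x => V₁ x - V₂ x with hWdef
  have hWz : ∀ x ∉ Ω, W x = 0 := fun x hx => by simp [hWdef, hV₁s x hx, hV₂s x hx]
  have hWsm : AEStronglyMeasurable W volume := (hV₁m.sub hV₂m).aestronglyMeasurable
  have hΩm : MeasurableSet Ω := hΩo.measurableSet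
  have hfin : volume Ω ≠ ⊤ := hΩb.measure_lt_top.ne
  have hWint : Integrable W := by
    have h1 : IntegrableOn W Ω volume := by
      apply Measure.integrableOn_of_bounded hfin hWsm (M := C₁ + C₂)
      filter_upwards with x
      exact (norm_sub_le _ _).trans (add_le_add (hC₁ x) (hC₂ x))
    have h2 := (integrable_indicator_iff hΩm).2 h1
    rwa [Set.indicator_eq_self.mpr (Function.support_subset_iff'.2 hWz)] at h2
  -- Step A: the Fourier-type integrals vanish
  have hFour : ∀ ξ : EuclideanSpace ℝ (Fin n),
      ∫ x, Complex.exp (((inner ℝ ξ x : ℝ) : ℂ) * Complex.I) • W x = 0 := by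
    intro ξ
    obtain ⟨η, hη0, hηn⟩ := InvScat.exists_orth hn ξ
    set p : EuclideanSpace ℝ (Fin n) := η
    set q : EuclideanSpace ℝ (Fin n) := (2⁻¹ : ℝ) • ξ
    have hq0 : (inner ℝ p q : ℝ) = 0 := by rw [real_inner_smul_right, hη0, mul_zero]
    have hq0' : (inner ℝ (-p) q : ℝ) = 0 := by rw [inner_neg_left, hq0, neg_zero]
    have hqn : ‖p‖ = ‖q‖ := by
      rw [norm_smul, Real.norm_eq_abs, abs_of_pos (by norm_num : (0:ℝ) < 2⁻¹), hηn]
      ring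
    have hqn' : ‖-p‖ = ‖q‖ := by rw [norm_neg]; exact hqn
    have hu₁ := InvScat.harmonic_exp_expChar p q hq0 hqn
    have hu₂ := InvScat.harmonic_exp_expChar (-p) q hq0' hqn'
    have hint := h _ _ hu₁ hu₂
    have hprod : ∀ x, (V₁ x - V₂ x) * Complex.exp (InvScat.expChar p q x) *
        Complex.exp (InvScat.expChar (-p) q x)
        = Complex.exp (((inner ℝ ξ x : ℝ) : ℂ) * Complex.I) • W x := by
      intro x
      rw [mul_assoc, ← Complex.exp_add, InvScat.expChar_apply, InvScat.expChar_apply]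
      have e1 : (inner ℝ (-p) x : ℝ) = - (inner ℝ p x : ℝ) := inner_neg_left p x
      have e2 : (inner ℝ q x : ℝ) = 2⁻¹ * (inner ℝ ξ x : ℝ) := real_inner_smul_left _ _ _
      rw [e1, e2]
      rw [smul_eq_mul, hWdef]
      push_cast
      ring_nf
    rw [show (∫ x in Ω, (V₁ x - V₂ x) * Complex.exp (InvScat.expChar p q x) *
        Complex.exp (InvScat.expChar (-p) q x))
        = ∫ x in Ω, Complex.exp (((inner ℝ ξ x : ℝ) : ℂ) * Complex.I) • W x from
      integral_congr_ae (Filter.Eventually.of_forall fun x => hprod x)] at hint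
    rwa [setIntegral_eq_integral_of_forall_compl_eq_zero
      (fun x hx => by rw [hWz x hx, smul_zero])] at hint
  -- Step B: the Fourier transform of W vanishes
  have hFW : ∀ w, FourierTransform.fourier W w = 0 := by
    intro w
    rw [Real.fourier_eq']
    rw [← hFour ((-(2 * Real.pi)) • w)]
    apply integral_congr_ae
    filter_upwards with v
    congr 2
    rw [real_inner_smul_left, real_inner_comm]
    push_cast
    ring
  -- Step C: W = 0 a.e.
  have hW0 : ∀ᵐ x ∂(volume : Measure (EuclideanSpace ℝ (Fin n))), W x = 0 := by
    apply ae_eq_zero_of_integral_contDiff_smul_eq_zero hWint.locallyIntegrable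
    intro g hgsm hgsupp
    have hGsm : ContDiff ℝ (⊤ : ℕ∞) (fun x => (g x : ℂ)) :=
      Complex.ofRealCLM.contDiff.comp hgsm
    have hGsupp : HasCompactSupport (fun x => (g x : ℂ)) :=
      HasCompactSupport.comp_left (g := Complex.ofReal) hgsupp Complex.ofReal_zero
    set G : SchwartzMap (EuclideanSpace ℝ (Fin n)) ℂ := InvScat.toSchwartz _ hGsm hGsupp with hGdef
    set H := (FourierTransform.fourierCLE ℂ (SchwartzMap (EuclideanSpace ℝ (Fin n)) ℂ)).symm G with hHdef
    have hFH : FourierTransform.fourier (⇑H) = ⇑G := by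
      have h1 := (FourierTransform.fourierCLE ℂ (SchwartzMap (EuclideanSpace ℝ (Fin n)) ℂ)).apply_symm_apply G
      calc FourierTransform.fourier (⇑H) = ⇑((FourierTransform.fourierCLE ℂ (SchwartzMap (EuclideanSpace ℝ (Fin n)) ℂ)) H) := by
            rw [FourierTransform.fourierCLE_apply, SchwartzMap.fourier_coe]
        _ = ⇑G := by rw [h1]
    have hLflip : (innerₗ (EuclideanSpace ℝ (Fin n))).flip = innerₗ _ := by
      apply LinearMap.ext; intro u; apply LinearMap.ext; intro v
      simp only [LinearMap.flip_apply, innerₗ_apply_apply]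
      exact real_inner_comm u v
    have key := VectorFourier.integral_fourierIntegral_smul_eq_flip
      (e := Real.fourierChar) (L := innerₗ (EuclideanSpace ℝ (Fin n)))
      (μ := volume) (ν := volume)
      Real.continuous_fourierChar continuous_inner hWint H.integrable
    rw [hLflip] at key
    have hLHS : (∫ ξ, VectorFourier.fourierIntegral Real.fourierChar volume
        (innerₗ (EuclideanSpace ℝ (Fin n))) W ξ • H ξ) = 0 := by
      rw [integral_eq_zero_of_ae]
      filter_upwards with ξ
      have : VectorFourier.fourierIntegral Real.fourierChar volume
          (innerₗ (EuclideanSpace ℝ (Fin n))) W ξ = FourierTransform.fourier W ξ := rfl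
      rw [this, hFW, zero_smul]
      simp
    rw [hLHS] at key
    have hRHS : (∫ x, W x • VectorFourier.fourierIntegral Real.fourierChar volume
        (innerₗ (EuclideanSpace ℝ (Fin n))) (⇑H) x) = ∫ x, g x • W x := by
      apply integral_congr_ae
      filter_upwards with x
      have : VectorFourier.fourierIntegral Real.fourierChar volume
          (innerₗ (EuclideanSpace ℝ (Fin n))) (⇑H) x = FourierTransform.fourier (⇑H) x := rfl
      rw [this, hFH]
      have hGx : G x = (g x : ℂ) := rfl
      rw [hGx, smul_eq_mul, Complex.real_smul, mul_comm]
    rw [hRHS] at key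
    exact key.symm
  have := ae_restrict_of_ae (s := Ω) hW0
  filter_upwards [this] with x hx
  exact sub_eq_zero.mp hx
end

section
/- Let n ≥ 2, let Ω ⊂ ℝⁿ be a bounded open set, and let f : ℝⁿ → ℂ be a bounded measurable function vanishing outside Ω. If ∫_Ω f(x) exp(ρ₁·x) exp(ρ₂·x) dx = 0 for every pair ρ₁, ρ₂ ∈ ℂⁿ satisfying ρ₁·ρ₁ = 0 and ρ₂·ρ₂ = 0, then f = 0 almost everywhere. -/
open MeasureTheory FourierTransform Real Complex
open scoped ContDiff

theorem aux_orth {n : ℕ} (hn : 2 ≤ n) (ξ : EuclideanSpace ℝ (Fin n)) :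
    ∃ η : EuclideanSpace ℝ (Fin n), inner ℝ ξ η = (0:ℝ) ∧ ‖η‖ = ‖ξ‖ := by
  rcases eq_or_ne ξ 0 with rfl | hξ
  · exact ⟨0, by simp⟩
  · have h1 : Module.finrank ℝ (ℝ ∙ ξ) = 1 := finrank_span_singleton hξ
    have h2 : Module.finrank ℝ (EuclideanSpace ℝ (Fin n)) = n := finrank_euclideanSpace_fin
    have h3 : 0 < Module.finrank ℝ ((ℝ ∙ ξ)ᗮ) := by
      have := Submodule.finrank_add_finrank_orthogonal (K := ℝ ∙ ξ)
      omega
    obtain ⟨v, hv, hv0⟩ : ∃ v ∈ (ℝ ∙ ξ)ᗮ, v ≠ 0 := by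
      rw [Module.finrank_pos_iff] at h3
      obtain ⟨⟨v, hv⟩, hv0⟩ := exists_ne (0 : (ℝ ∙ ξ)ᗮ)
      exact ⟨v, hv, by simpa [Submodule.mk_eq_zero] using hv0⟩
    refine ⟨(‖ξ‖ / ‖v‖) • v, ?_, ?_⟩
    · have : inner ℝ ξ v = (0:ℝ) :=
        (Submodule.mem_orthogonal _ v).1 hv ξ (Submodule.mem_span_singleton_self ξ)
      rw [real_inner_smul_right, this, mul_zero]
    · rw [norm_smul]
      simp [abs_div, _root_.abs_of_nonneg (norm_nonneg ξ), norm_ne_zero_iff.2 hv0,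
        div_mul_cancel₀, norm_ne_zero_iff.2 hv0]

theorem aux_iso {n : ℕ} (ξ η : EuclideanSpace ℝ (Fin n)) (s : ℝ)
    (hs : s = 1 ∨ s = -1)
    (h1 : (∑ i, ξ i * η i) = 0) (h2 : (∑ i, η i ^ 2) = ∑ i, ξ i ^ 2) :
    (∑ i, ((Complex.I * ξ i + s * η i)/2) ^ 2) = 0 := by
  have key : ∀ i, ((Complex.I * (ξ i:ℂ) + (s:ℂ) * η i)/2) ^ 2 =
      ((s:ℂ)^2 * (η i:ℂ)^2 - (ξ i:ℂ)^2)/4 + (Complex.I * (s/2)) * (ξ i * η i) := by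
    intro i
    linear_combination (((ξ i:ℂ))^2/4) * Complex.I_sq
  rw [Finset.sum_congr rfl (fun i _ ↦ key i), Finset.sum_add_distrib, ← Finset.sum_div,
    ← Finset.mul_sum]
  have hs2 : (s:ℂ)^2 = 1 := by rcases hs with rfl | rfl <;> norm_num
  have c1 : (∑ i, ((ξ i:ℂ) * η i)) = 0 := by norm_cast
  have c2 : (∑ i, ((s:ℂ)^2 * (η i:ℂ)^2 - (ξ i:ℂ)^2)) = 0 := by
    rw [Finset.sum_sub_distrib]
    have : (∑ i, ((η i:ℂ))^2) = ∑ i, ((ξ i:ℂ))^2 := by norm_cast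
    simp [hs2, this]
  rw [c1, c2]
  simp


theorem aux_ae {n : ℕ} (f : EuclideanSpace ℝ (Fin n) → ℂ)
    (hfi : Integrable f) (hFf : ∀ w, 𝓕 f w = 0) : f =ᵐ[volume] 0 := by
  have main : ∀ (g : EuclideanSpace ℝ (Fin n) → ℝ), ContDiff ℝ ∞ g → HasCompactSupport g →
      ∫ x, g x • f x = 0 := by
    intro g gsmooth gsupp
    set gc : EuclideanSpace ℝ (Fin n) → ℂ := fun x ↦ (g x : ℂ) with hgc
    have gc_cd : ContDiff ℝ ∞ gc := Complex.ofRealCLM.contDiff.comp gsmooth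
    have gc_supp : HasCompactSupport gc := gsupp.comp_left (g := Complex.ofReal) rfl
    have gc_cont : Continuous gc := gc_cd.continuous
    have gc_int : Integrable gc := gc_cont.integrable_of_hasCompactSupport gc_supp
    -- integrability of weighted iterated derivatives
    have hderiv : ∀ (k m : ℕ), (k:ℕ∞) ≤ (⊤:ℕ∞) → (m:ℕ∞) ≤ (⊤:ℕ∞) →
        Integrable (fun v : EuclideanSpace ℝ (Fin n) ↦ ‖v‖ ^ k * ‖iteratedFDeriv ℝ m gc v‖) := by
      intro k m _ _
      have hc : Continuous (fun v : EuclideanSpace ℝ (Fin n) ↦ ‖v‖ ^ k * ‖iteratedFDeriv ℝ m gc v‖) :=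
        (continuous_norm.pow k).mul (gc_cd.continuous_iteratedFDeriv (by exact_mod_cast le_top)).norm
      have hs : HasCompactSupport (fun v : EuclideanSpace ℝ (Fin n) ↦ ‖v‖ ^ k * ‖iteratedFDeriv ℝ m gc v‖) :=
        HasCompactSupport.mul_left ((gc_supp.iteratedFDeriv m).norm)
      exact hc.integrable_of_hasCompactSupport hs
    -- decay of Fourier transform
    set d : ℕ := Module.finrank ℝ (EuclideanSpace ℝ (Fin n)) with hd
    have hdecay : ∀ w : EuclideanSpace ℝ (Fin n), ‖w‖ ^ (d+1) * ‖𝓕 gc w‖ ≤ (2 * π) ^ 0 * (2 * 0 + 2) ^ (d+1) *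
        ∑ p ∈ Finset.range (0 + 1) ×ˢ Finset.range ((d+1) + 1),
          ∫ v : EuclideanSpace ℝ (Fin n), ‖v‖ ^ p.1 * ‖iteratedFDeriv ℝ p.2 gc v‖ := by
      intro w
      have := Real.pow_mul_norm_iteratedFDeriv_fourier_le (K := (⊤:ℕ∞)) (N := (⊤:ℕ∞))
        gc_cd hderiv (k := 0) (n := d+1) le_top le_top w
      simpa [norm_iteratedFDeriv_zero] using this
    set C : ℝ := (2 * π) ^ 0 * (2 * 0 + 2) ^ (d+1) *
        ∑ p ∈ Finset.range (0 + 1) ×ˢ Finset.range ((d+1) + 1),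
          ∫ v : EuclideanSpace ℝ (Fin n), ‖v‖ ^ p.1 * ‖iteratedFDeriv ℝ p.2 gc v‖ with hC
    set B : ℝ := ∫ v : EuclideanSpace ℝ (Fin n), ‖gc v‖ with hB
    have hBnn : 0 ≤ B := integral_nonneg (fun v ↦ norm_nonneg _)
    have hsup : ∀ w : EuclideanSpace ℝ (Fin n), ‖𝓕 gc w‖ ≤ B :=
      fun w ↦ VectorFourier.norm_fourierIntegral_le_integral_norm _ _ _ _ _
    have hCnn : 0 ≤ C := le_trans (by positivity) (hdecay 0)
    -- integrability of 𝓕 gc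
    have hFgc_cont : Continuous (𝓕 gc) :=
      VectorFourier.fourierIntegral_continuous Real.continuous_fourierChar
        continuous_inner gc_int
    have hFgc_int : Integrable (𝓕 gc) := by
      have hbound : ∀ w : EuclideanSpace ℝ (Fin n),
          ‖𝓕 gc w‖ ≤ 2^(d+1) * (B + C) * (1 + ‖w‖) ^ (-((d+1 : ℕ) : ℝ)) := by
        intro w
        rw [Real.rpow_neg (by positivity), Real.rpow_natCast,
          mul_comm (2^(d+1) * (B + C)), ← div_eq_inv_mul, le_div_iff₀ (by positivity)]
        calc ‖𝓕 gc w‖ * (1 + ‖w‖) ^ (d+1)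
            = (1 + ‖w‖)^(d+1) * ‖𝓕 gc w‖ := by ring
          _ ≤ (2 * max 1 ‖w‖)^(d+1) * ‖𝓕 gc w‖ := by
              gcongr
              rcases le_total 1 ‖w‖ with h | h
              · rw [max_eq_right h]; linarith
              · rw [max_eq_left h]; linarith [norm_nonneg w]
          _ = 2^(d+1) * (max 1 ‖w‖ ^ (d+1) * ‖𝓕 gc w‖) := by rw [mul_pow]; ring
          _ ≤ 2^(d+1) * (B + C) := by
              gcongr 2^(d+1) * ?_
              rcases le_total 1 ‖w‖ with h | h
              · rw [max_eq_right h]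
                calc ‖w‖^(d+1) * ‖𝓕 gc w‖ ≤ C := hdecay w
                  _ ≤ B + C := by linarith
              · rw [max_eq_left h, one_pow, one_mul]
                calc ‖𝓕 gc w‖ ≤ B := hsup w
                  _ ≤ B + C := by linarith
      have hint : Integrable (fun w : EuclideanSpace ℝ (Fin n) ↦
          2^(d+1) * (B + C) * (1 + ‖w‖) ^ (-((d+1 : ℕ) : ℝ))) := by
        apply Integrable.const_mul
        apply integrable_one_add_norm (E := EuclideanSpace ℝ (Fin n))
        push_cast
        simp [hd]
      exact hint.mono' hFgc_cont.aestronglyMeasurable (ae_of_all _ hbound)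
    -- inverse transform
    have hinv_int : Integrable (𝓕⁻ gc) := by
      have : (𝓕⁻ gc) = fun w ↦ 𝓕 gc (-w) := by
        funext w; exact Real.fourierInv_eq_fourier_neg gc w
      rw [this]
      exact hFgc_int.comp_neg
    have hFinv : 𝓕 (𝓕⁻ gc) = gc := gc_cont.fourier_fourierInv_eq gc_int hFgc_int
    -- self-adjointness / flip
    have flip := VectorFourier.integral_bilin_fourierIntegral_eq_flip
      (M := ContinuousLinearMap.mul ℂ ℂ) (L := innerₗ (EuclideanSpace ℝ (Fin n))) (μ := volume) (ν := volume)
      Real.continuous_fourierChar continuous_inner hinv_int hfi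
    rw [flip_innerₗ] at flip
    simp only [ContinuousLinearMap.mul_apply'] at flip
    have hLHS : ∫ ξ : EuclideanSpace ℝ (Fin n), (VectorFourier.fourierIntegral 𝐞 volume (innerₗ (EuclideanSpace ℝ (Fin n))) (𝓕⁻ gc) ξ) * f ξ
        = ∫ ξ : EuclideanSpace ℝ (Fin n), gc ξ * f ξ := by
      congr 1
      funext ξ
      have : VectorFourier.fourierIntegral 𝐞 volume (innerₗ (EuclideanSpace ℝ (Fin n))) (𝓕⁻ gc) ξ = gc ξ := by
        have := congrFun hFinv ξ
        exact this
      rw [this]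
    have hRHS : ∫ x : EuclideanSpace ℝ (Fin n), (𝓕⁻ gc) x * (VectorFourier.fourierIntegral 𝐞 volume (innerₗ (EuclideanSpace ℝ (Fin n))) f x)
        = 0 := by
      have : ∀ x : EuclideanSpace ℝ (Fin n), (𝓕⁻ gc) x * (VectorFourier.fourierIntegral 𝐞 volume (innerₗ (EuclideanSpace ℝ (Fin n))) f x) = 0 := by
        intro x
        have : VectorFourier.fourierIntegral 𝐞 volume (innerₗ (EuclideanSpace ℝ (Fin n))) f x = 0 := hFf x
        rw [this, mul_zero]
      simp only [this, integral_zero]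
    have : ∫ ξ : EuclideanSpace ℝ (Fin n), gc ξ * f ξ = 0 := by
      rw [← hLHS]
      calc _ = ∫ x : EuclideanSpace ℝ (Fin n), (𝓕⁻ gc) x * (VectorFourier.fourierIntegral 𝐞 volume (innerₗ (EuclideanSpace ℝ (Fin n))) f x) := flip
        _ = 0 := hRHS
    simpa [Complex.real_smul] using this
  have := ae_eq_zero_of_integral_contDiff_smul_eq_zero hfi.locallyIntegrable main
  filter_upwards [this] with x hx
  simpa using hx


theorem stmt4 {n : ℕ} (hn : 2 ≤ n) (Ω : Set (EuclideanSpace ℝ (Fin n)))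
    (hΩo : IsOpen Ω) (hΩb : Bornology.IsBounded Ω)
    (f : EuclideanSpace ℝ (Fin n) → ℂ)
    (hfm : Measurable f) (hfb : ∃ C, ∀ x, ‖f x‖ ≤ C)
    (hfs : ∀ x ∉ Ω, f x = 0)
    (h : ∀ ρ₁ ρ₂ : Fin n → ℂ, (∑ i, ρ₁ i ^ 2) = 0 → (∑ i, ρ₂ i ^ 2) = 0 →
      ∫ x in Ω, f x * Complex.exp (∑ i, ρ₁ i * (x i : ℂ)) *
        Complex.exp (∑ i, ρ₂ i * (x i : ℂ)) = 0) :
    f =ᵐ[volume] 0 := by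
  have hfi : Integrable f := by
    obtain ⟨C, hC⟩ := hfb
    have hμ : volume Ω ≠ ⊤ := hΩb.measure_lt_top.ne
    have : IntegrableOn f Ω := Measure.integrableOn_of_bounded hμ hfm.aestronglyMeasurable
      (ae_of_all _ hC)
    have heq : Ω.indicator f = f := by
      funext x
      by_cases hx : x ∈ Ω
      · simp [Set.indicator_of_mem hx]
      · simp [Set.indicator_of_notMem hx, hfs x hx]
    rw [← heq]
    exact (integrable_indicator_iff hΩo.measurableSet).2 this
  have hFf : ∀ w, 𝓕 f w = 0 := by
    intro w
    set ξ : EuclideanSpace ℝ (Fin n) := (-(2*π)) • w with hξdef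
    obtain ⟨η, hηo, hηn⟩ := aux_orth hn ξ
    have h1 : (∑ i, ξ i * η i) = 0 := by
      simpa [PiLp.inner_apply, RCLike.inner_apply, mul_comm] using hηo
    have h2 : (∑ i, η i ^ 2) = ∑ i, ξ i ^ 2 := by
      have e1 := real_inner_self_eq_norm_sq η
      have e2 := real_inner_self_eq_norm_sq ξ
      rw [hηn] at e1
      have := e1.trans e2.symm
      simp only [PiLp.inner_apply, RCLike.inner_apply, conj_trivial] at this
      simpa [sq, mul_comm] using this
    have key := h (fun i ↦ (Complex.I * ξ i + (1:ℝ) * η i)/2)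
        (fun i ↦ (Complex.I * ξ i + (-1:ℝ) * η i)/2)
        (aux_iso ξ η 1 (Or.inl rfl) h1 h2) (aux_iso ξ η (-1) (Or.inr rfl) h1 h2)
    rw [Real.fourier_eq']
    rw [← setIntegral_eq_integral_of_forall_compl_eq_zero
      (fun x hx ↦ by simp [hfs x hx])]
    rw [← key]
    refine setIntegral_congr_fun hΩo.measurableSet (fun x _ ↦ ?_)
    simp only []
    rw [smul_eq_mul]
    conv_rhs => rw [mul_assoc, ← Complex.exp_add]
    have hinner : (inner ℝ x w : ℝ) = ∑ i, x i * w i := by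
      simp [PiLp.inner_apply, RCLike.inner_apply, mul_comm]
    have hsum : (∑ i, (Complex.I * ξ i + (1:ℝ) * η i)/2 * (x i:ℂ)) +
        (∑ i, (Complex.I * ξ i + (-1:ℝ) * η i)/2 * (x i:ℂ)) =
        ((-2 * (π * (inner ℝ x w : ℝ)) : ℝ) : ℂ) * Complex.I := by
      rw [← Finset.sum_add_distrib, hinner]
      push_cast
      have step : ∀ i : Fin n, (Complex.I * (ξ i:ℂ) + 1 * (η i:ℂ))/2 * (x i:ℂ) +
          (Complex.I * (ξ i:ℂ) + -1 * (η i:ℂ))/2 * (x i:ℂ) = Complex.I * ((ξ i:ℂ)) * (x i:ℂ) := by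
        intro i; ring
      rw [Finset.sum_congr rfl (fun i _ ↦ step i)]
      have hxi : ∀ i, ξ i = -(2*π) * w i := fun i ↦ rfl
      simp only [hxi]
      push_cast
      simp only [Finset.mul_sum, Finset.sum_mul]
      exact Finset.sum_congr rfl fun i _ ↦ by ring
    rw [hsum, mul_comm]
    congr 2
    push_cast
    ring
  exact aux_ae f hfi hFf
end

section
/- Let n ≥ 2, let Ω ⊂ ℝⁿ be a bounded open set. The linear span of the set of restrictions to Ω of products u₁u₂, where u₁ and u₂ range over smooth complex-valued harmonic functions on ℝⁿ, is dense in L²(Ω, ℂ). -/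
open MeasureTheory

open Complex
open scoped ENNReal

variable {n : ℕ}

noncomputable def expL (L : EuclideanSpace ℝ (Fin n) →L[ℝ] ℂ) :
    EuclideanSpace ℝ (Fin n) → ℂ := fun x => Complex.exp (L x)

lemma expL_hasFDerivAt (L : EuclideanSpace ℝ (Fin n) →L[ℝ] ℂ) (x : EuclideanSpace ℝ (Fin n)) :
    HasFDerivAt (expL L) (Complex.exp (L x) • L) x :=
  (Complex.hasDerivAt_exp (L x)).comp_hasFDerivAt x L.hasFDerivAt

lemma expL_contDiff (L : EuclideanSpace ℝ (Fin n) →L[ℝ] ℂ) :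
    ContDiff ℝ (⊤ : ℕ∞) (expL L) :=
  ((Complex.contDiff_exp : ContDiff ℂ (⊤:ℕ∞) Complex.exp).restrict_scalars ℝ).comp L.contDiff

lemma expL_laplacian (L : EuclideanSpace ℝ (Fin n) →L[ℝ] ℂ) (x : EuclideanSpace ℝ (Fin n)) :
    laplacian (expL L) x = Complex.exp (L x) * ∑ i : Fin n, (L (EuclideanSpace.single i 1))^2 := by
  unfold laplacian
  rw [Finset.mul_sum]
  congr 1; ext i
  have h1 : (fun y => fderiv ℝ (expL L) y (EuclideanSpace.single i 1))
      = fun y => Complex.exp (L y) * L (EuclideanSpace.single i 1) := by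
    ext y
    rw [(expL_hasFDerivAt L y).fderiv]
    simp [smul_eq_mul]
  rw [h1]
  have h2 : HasFDerivAt (fun y => Complex.exp (L y) * L (EuclideanSpace.single i 1))
      ((L (EuclideanSpace.single i 1)) • Complex.exp (L x) • L) x :=
    (expL_hasFDerivAt L x).mul_const _
  rw [h2.fderiv]
  simp [smul_eq_mul]
  ring

lemma expL_harmonic (L : EuclideanSpace ℝ (Fin n) →L[ℝ] ℂ)
    (h : ∑ i : Fin n, (L (EuclideanSpace.single i 1))^2 = 0) : Harmonic (expL L) :=
  ⟨expL_contDiff L, fun x => by rw [expL_laplacian, h, mul_zero]⟩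

noncomputable def Lc (a b : EuclideanSpace ℝ (Fin n)) : EuclideanSpace ℝ (Fin n) →L[ℝ] ℂ :=
  Complex.ofRealCLM.comp (innerSL ℝ a) + Complex.I • (Complex.ofRealCLM.comp (innerSL ℝ b))

lemma Lc_apply (a b x : EuclideanSpace ℝ (Fin n)) :
    Lc a b x = (inner ℝ a x : ℝ) + Complex.I * (inner ℝ b x : ℝ) := by
  simp [Lc, smul_eq_mul]

lemma inner_single (a : EuclideanSpace ℝ (Fin n)) (i : Fin n) :
    (inner ℝ a (EuclideanSpace.single i 1) : ℝ) = a i := by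
  rw [real_inner_comm]
  simp [EuclideanSpace.inner_single_left]

lemma Lc_single (a b : EuclideanSpace ℝ (Fin n)) (i : Fin n) :
    Lc a b (EuclideanSpace.single i 1) = (a i : ℂ) + Complex.I * (b i : ℝ) := by
  rw [Lc_apply, inner_single, inner_single]

lemma Lc_harmonic (a b : EuclideanSpace ℝ (Fin n)) (hab : (inner ℝ a b : ℝ) = 0)
    (hnorm : ‖a‖ = ‖b‖) : Harmonic (expL (Lc a b)) := by
  apply expL_harmonic
  have key : ∑ i : Fin n, (Lc a b (EuclideanSpace.single i 1))^2
      = (((inner ℝ a a : ℝ) : ℂ) - ((inner ℝ b b : ℝ) : ℂ)) + 2 * Complex.I * ((inner ℝ a b : ℝ) : ℂ) := by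
    have ha : (inner ℝ a a : ℝ) = ∑ i, a i * a i := by
      simp only [PiLp.inner_apply, RCLike.inner_apply, conj_trivial, mul_comm]
    have hb : (inner ℝ b b : ℝ) = ∑ i, b i * b i := by
      simp only [PiLp.inner_apply, RCLike.inner_apply, conj_trivial, mul_comm]
    have hab' : (inner ℝ a b : ℝ) = ∑ i, a i * b i := by
      simp only [PiLp.inner_apply, RCLike.inner_apply, conj_trivial, mul_comm]
    rw [ha, hb, hab']
    push_cast
    rw [← Finset.sum_sub_distrib, Finset.mul_sum, ← Finset.sum_add_distrib]
    congr 1; ext i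
    rw [Lc_single]
    ring_nf
    rw [Complex.I_sq]
    ring
  rw [key, hab]
  have : (inner ℝ a a : ℝ) = (inner ℝ b b : ℝ) := by
    rw [real_inner_self_eq_norm_sq, real_inner_self_eq_norm_sq, hnorm]
  rw [this]
  simp

lemma exists_orth (hn : 2 ≤ n) (ξ : EuclideanSpace ℝ (Fin n)) :
    ∃ η : EuclideanSpace ℝ (Fin n), (inner ℝ η ξ : ℝ) = 0 ∧ ‖η‖ = ‖ξ‖ / 2 := by
  rcases eq_or_ne ξ 0 with rfl | hξ
  · exact ⟨0, by simp, by simp⟩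
  · have hfin : Module.finrank ℝ ((ℝ ∙ ξ)ᗮ : Submodule ℝ (EuclideanSpace ℝ (Fin n))) = n - 1 := by
      have h1 := Submodule.finrank_add_finrank_orthogonal (𝕜 := ℝ) (ℝ ∙ ξ)
      rw [finrank_span_singleton hξ, finrank_euclideanSpace_fin] at h1
      omega
    have hpos : 0 < Module.rank ℝ ((ℝ ∙ ξ)ᗮ : Submodule ℝ (EuclideanSpace ℝ (Fin n))) := by
      rw [← Module.finrank_eq_rank, hfin]
      exact_mod_cast Nat.sub_pos_of_lt (by omega)
    obtain ⟨v, hv, hv0⟩ := exists_mem_ne_zero_of_rank_pos hpos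
    refine ⟨(‖ξ‖ / (2 * ‖v‖)) • v, ?_, ?_⟩
    · have : (inner ℝ v ξ : ℝ) = 0 := Submodule.mem_orthogonal_singleton_iff_inner_left.mp hv
      rw [real_inner_smul_left, this, mul_zero]
    · rw [norm_smul, Real.norm_eq_abs, _root_.abs_of_nonneg (by positivity)]
      have hv' : ‖v‖ ≠ 0 := norm_ne_zero_iff.mpr hv0
      field_simp

lemma character_prod (hn : 2 ≤ n) (ξ : EuclideanSpace ℝ (Fin n)) :
    ∃ u₁ u₂ : EuclideanSpace ℝ (Fin n) → ℂ, Harmonic u₁ ∧ Harmonic u₂ ∧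
      ∀ x, u₁ x * u₂ x = Complex.exp (Complex.I * (inner ℝ ξ x : ℝ)) := by
  obtain ⟨η, hηξ, hηn⟩ := exists_orth hn ξ
  set b : EuclideanSpace ℝ (Fin n) := (1/2 : ℝ) • ξ with hb
  have hbn : ‖b‖ = ‖ξ‖ / 2 := by
    rw [hb, norm_smul, Real.norm_eq_abs]
    rw [_root_.abs_of_nonneg (by norm_num : (0:ℝ) ≤ 1/2)]
    ring
  have hηb : (inner ℝ η b : ℝ) = 0 := by
    rw [hb, real_inner_smul_right, hηξ, mul_zero]
  refine ⟨expL (Lc η b), expL (Lc (-η) b), Lc_harmonic η b hηb (by rw [hηn, hbn]),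
    Lc_harmonic (-η) b (by rw [inner_neg_left, hηb, neg_zero]) (by rw [norm_neg, hηn, hbn]), ?_⟩
  intro x
  rw [expL, expL, ← Complex.exp_add, Lc_apply, Lc_apply]
  congr 1
  have h2 : (inner ℝ b x : ℝ) = (1/2 : ℝ) * (inner ℝ ξ x : ℝ) := by
    rw [hb, real_inner_smul_left]
  rw [inner_neg_left, h2]
  push_cast
  ring

noncomputable def gchar (ξ : EuclideanSpace ℝ (Fin n)) : EuclideanSpace ℝ (Fin n) → ℂ :=
  fun x => Complex.exp (Complex.I * ((inner ℝ ξ x : ℝ) : ℂ))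

lemma gchar_continuous (ξ : EuclideanSpace ℝ (Fin n)) : Continuous (gchar ξ) := by
  apply Complex.continuous_exp.comp
  exact continuous_const.mul (Complex.continuous_ofReal.comp
    ((continuous_const (y := ξ)).inner continuous_id))

lemma gchar_norm (ξ x : EuclideanSpace ℝ (Fin n)) : ‖gchar ξ x‖ = 1 := by
  rw [gchar, Complex.norm_exp]
  simp

lemma gchar_mul (ξ ξ' x : EuclideanSpace ℝ (Fin n)) :
    gchar ξ x * gchar ξ' x = gchar (ξ + ξ') x := by
  rw [gchar, gchar, gchar, ← Complex.exp_add, inner_add_left]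
  push_cast
  ring_nf

lemma gchar_zero (x : EuclideanSpace ℝ (Fin n)) : gchar 0 x = 1 := by
  simp [gchar]

lemma gchar_star (ξ x : EuclideanSpace ℝ (Fin n)) :
    star (gchar ξ x) = gchar (-ξ) x := by
  rw [gchar, gchar, Complex.star_def, ← Complex.exp_conj, map_mul, Complex.conj_I,
    Complex.conj_ofReal, inner_neg_left]
  push_cast
  ring_nf

lemma gchar_prod (hn : 2 ≤ n) (ξ : EuclideanSpace ℝ (Fin n)) :
    ∃ u₁ u₂ : EuclideanSpace ℝ (Fin n) → ℂ, Harmonic u₁ ∧ Harmonic u₂ ∧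
      gchar ξ = fun x => u₁ x * u₂ x := by
  obtain ⟨u₁, u₂, h₁, h₂, h⟩ := character_prod hn ξ
  exact ⟨u₁, u₂, h₁, h₂, funext fun x => (h x).symm⟩

variable (n) in
noncomputable def charK (K : Set (EuclideanSpace ℝ (Fin n))) (ξ : EuclideanSpace ℝ (Fin n)) :
    C(K, ℂ) := ⟨fun x => gchar ξ x.1, (gchar_continuous ξ).comp continuous_subtype_val⟩

lemma charK_mul (K : Set (EuclideanSpace ℝ (Fin n))) (ξ ξ' : EuclideanSpace ℝ (Fin n)) :
    charK n K ξ * charK n K ξ' = charK n K (ξ + ξ') := by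
  ext x; exact gchar_mul ξ ξ' x.1

lemma charK_one (K : Set (EuclideanSpace ℝ (Fin n))) : charK n K 0 = 1 := by
  ext x; exact gchar_zero x.1

lemma charK_star (K : Set (EuclideanSpace ℝ (Fin n))) (ξ : EuclideanSpace ℝ (Fin n)) :
    star (charK n K ξ) = charK n K (-ξ) := by
  ext x; exact gchar_star ξ x.1

variable (n) in
noncomputable def charAlg (K : Set (EuclideanSpace ℝ (Fin n))) : StarSubalgebra ℂ C(K, ℂ) where
  toSubalgebra := Algebra.adjoin ℂ (Set.range (charK n K))
  star_mem' := by
    intro x hx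
    show star x ∈ Algebra.adjoin ℂ (Set.range (charK n K))
    induction hx using Algebra.adjoin_induction with
    | mem f hf =>
      obtain ⟨ξ, rfl⟩ := hf
      rw [charK_star]
      exact Algebra.subset_adjoin ⟨-ξ, rfl⟩
    | algebraMap r =>
      rw [← algebraMap_star_comm]
      exact Subalgebra.algebraMap_mem _ _
    | add f g _ _ hf hg => rw [star_add]; exact add_mem hf hg
    | mul f g _ _ hf hg => rw [star_mul]; exact mul_mem hg hf

variable (n) in
noncomputable def charMonoid (K : Set (EuclideanSpace ℝ (Fin n))) : Submonoid C(K, ℂ) where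
  carrier := Set.range (charK n K)
  one_mem' := ⟨0, charK_one K⟩
  mul_mem' := by rintro _ _ ⟨ξ, rfl⟩ ⟨ξ', rfl⟩; exact ⟨ξ + ξ', (charK_mul K ξ ξ').symm⟩

lemma charAlg_mem_span {K : Set (EuclideanSpace ℝ (Fin n))} {T : C(K, ℂ)}
    (hT : T ∈ charAlg n K) : T ∈ Submodule.span ℂ (Set.range (charK n K)) := by
  have h1 : T ∈ Subalgebra.toSubmodule (Algebra.adjoin ℂ (Set.range (charK n K))) := hT
  rw [Algebra.adjoin_eq_span] at h1
  have h2 : Submonoid.closure (Set.range (charK n K)) = charMonoid n K :=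
    Submonoid.closure_eq (charMonoid n K)
  rwa [h2] at h1

lemma charAlg_separates (K : Set (EuclideanSpace ℝ (Fin n))) :
    (charAlg n K).SeparatesPoints := by
  intro x y hxy
  have hd : x.1 - y.1 ≠ 0 := sub_ne_zero.mpr (fun h => hxy (Subtype.ext h))
  set d := x.1 - y.1 with hdd
  set ξ : EuclideanSpace ℝ (Fin n) := (Real.pi / ‖d‖^2) • d with hξ
  refine ⟨⇑(charK n K ξ), ⟨charK n K ξ, Algebra.subset_adjoin ⟨ξ, rfl⟩, rfl⟩, ?_⟩
  intro heq
  have hsub : (inner ℝ ξ x.1 : ℝ) - (inner ℝ ξ y.1 : ℝ) = Real.pi := by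
    rw [← inner_sub_right, hξ, real_inner_smul_left, ← hdd,
      real_inner_self_eq_norm_sq]
    have : ‖d‖ ≠ 0 := norm_ne_zero_iff.mpr hd
    field_simp
  have : gchar ξ x.1 = gchar ξ y.1 := heq
  rw [gchar, gchar] at this
  have h1 : Complex.exp (Complex.I * ((inner ℝ ξ x.1 : ℝ) : ℂ) -
      Complex.I * ((inner ℝ ξ y.1 : ℝ) : ℂ)) = 1 := by
    rw [Complex.exp_sub, this, div_self (Complex.exp_ne_zero _)]
  have h2 : Complex.I * ((inner ℝ ξ x.1 : ℝ) : ℂ) - Complex.I * ((inner ℝ ξ y.1 : ℝ) : ℂ)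
      = (Real.pi : ℂ) * Complex.I := by
    rw [← mul_sub]
    push_cast [← hsub]
    ring
  rw [h2, Complex.exp_pi_mul_I] at h1
  norm_num at h1

/-- The linear span, inside `L²(Ω, ℂ)`, of (restrictions to `Ω` of) products `u₁ u₂` of
smooth harmonic functions on `ℝⁿ` is dense. -/
theorem stmt5 {n : ℕ} (hn : 2 ≤ n) (Ω : Set (EuclideanSpace ℝ (Fin n)))
    (hΩo : IsOpen Ω) (hΩb : Bornology.IsBounded Ω) :
    Dense (↑(Submodule.span ℂ
      {F : Lp ℂ 2 (volume.restrict Ω) |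
        ∃ u₁ u₂ : EuclideanSpace ℝ (Fin n) → ℂ, Harmonic u₁ ∧ Harmonic u₂ ∧
          (F : EuclideanSpace ℝ (Fin n) → ℂ) =ᵐ[volume.restrict Ω]
            fun x => u₁ x * u₂ x}) : Set (Lp ℂ 2 (volume.restrict Ω))) := by
  classical
  haveI : Fact ((1:ℝ≥0∞) ≤ 2) := ⟨one_le_two⟩
  set μ := volume.restrict Ω with hμdef
  set S := {F : Lp ℂ 2 μ |
      ∃ u₁ u₂ : EuclideanSpace ℝ (Fin n) → ℂ, Harmonic u₁ ∧ Harmonic u₂ ∧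
        (F : EuclideanSpace ℝ (Fin n) → ℂ) =ᵐ[μ] fun x => u₁ x * u₂ x} with hSdef
  have hΩvol : volume Ω < ⊤ := hΩb.measure_lt_top
  haveI : IsFiniteMeasure μ := ⟨by rw [hμdef, Measure.restrict_apply_univ]; exact hΩvol⟩
  haveI : μ.WeaklyRegular :=
    MeasureTheory.Measure.WeaklyRegular.restrict_of_measure_ne_top hΩvol.ne
  set K := closure Ω with hKdef
  have hKc : IsCompact K := hΩb.isCompact_closure
  haveI : CompactSpace K := isCompact_iff_compactSpace.mp hKc
  have hΩK : Ω ⊆ K := subset_closure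
  have memS : ∀ ξ : EuclideanSpace ℝ (Fin n), MemLp (gchar ξ) 2 μ := fun ξ =>
    MemLp.of_bound (gchar_continuous ξ).aestronglyMeasurable 1
      (Filter.Eventually.of_forall fun x => (gchar_norm ξ x).le)
  have charLp_mem : ∀ ξ : EuclideanSpace ℝ (Fin n), (memS ξ).toLp (gchar ξ) ∈ S := by
    intro ξ
    obtain ⟨u₁, u₂, h₁, h₂, h⟩ := gchar_prod hn ξ
    exact ⟨u₁, u₂, h₁, h₂, ((memS ξ).coeFn_toLp).trans (by rw [← h])⟩
  have transfer : ∀ T ∈ charAlg n K, ∃ G ∈ Submodule.span ℂ S,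
      ∀ᵐ x ∂μ, ∀ hx : x ∈ K, (G : EuclideanSpace ℝ (Fin n) → ℂ) x = T ⟨x, hx⟩ := by
    intro T hT
    have hT' := charAlg_mem_span hT
    clear hT
    induction hT' using Submodule.span_induction with
    | mem T hT0 =>
      obtain ⟨ξ, rfl⟩ := hT0
      refine ⟨(memS ξ).toLp (gchar ξ), Submodule.subset_span (charLp_mem ξ), ?_⟩
      filter_upwards [(memS ξ).coeFn_toLp] with x hx
      intro hxK
      rw [hx]
      rfl
    | zero =>
      refine ⟨0, Submodule.zero_mem _, ?_⟩
      filter_upwards [Lp.coeFn_zero ℂ 2 μ] with x hx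
      intro _
      rw [hx]
      rfl
    | add f g _ _ hf hg =>
      obtain ⟨Gf, hGf, hf'⟩ := hf
      obtain ⟨Gg, hGg, hg'⟩ := hg
      refine ⟨Gf + Gg, Submodule.add_mem _ hGf hGg, ?_⟩
      filter_upwards [Lp.coeFn_add Gf Gg, hf', hg'] with x h1 h2 h3
      intro hxK
      rw [h1]
      simp [h2 hxK, h3 hxK]
    | smul c f _ hf =>
      obtain ⟨G, hG, h'⟩ := hf
      refine ⟨c • G, Submodule.smul_mem _ c hG, ?_⟩
      filter_upwards [Lp.coeFn_smul c G, h'] with x h1 h2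
      intro hxK
      rw [h1]
      simp [h2 hxK]
  have hSW : (charAlg n K).topologicalClosure = ⊤ :=
    ContinuousMap.starSubalgebra_topologicalClosure_eq_top_of_separatesPoints _
      (charAlg_separates K)
  intro F
  rw [Metric.mem_closure_iff]
  intro ε hε
  have hdense := MeasureTheory.Lp.boundedContinuousFunction_dense ℂ μ
    (by norm_num : (2:ℝ≥0∞) ≠ ⊤)
  obtain ⟨G₀, hG₀mem, hG₀⟩ := Metric.mem_closure_iff.mp (hdense F) (ε/2) (by positivity)
  obtain ⟨g, hg⟩ := MeasureTheory.Lp.mem_boundedContinuousFunction_iff.mp hG₀mem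
  have hgae : (G₀ : EuclideanSpace ℝ (Fin n) → ℂ) =ᵐ[μ] g := by
    have h := ContinuousMap.coeFn_toAEEqFun μ g.toContinuousMap
    rw [hg] at h
    exact h
  set gK : C(K, ℂ) := ⟨fun x => g x.1, g.continuous.comp continuous_subtype_val⟩ with hgK
  have hgKmem : gK ∈ closure ((charAlg n K : Set C(K, ℂ))) := by
    have h : gK ∈ (charAlg n K).topologicalClosure := by
      rw [hSW]; trivial
    exact h
  set R : ℝ≥0∞ := μ Set.univ ^ (2:ℝ≥0∞).toReal⁻¹ with hR
  have hRlt : R < ⊤ := ENNReal.rpow_lt_top_of_nonneg (by norm_num) (measure_ne_top μ _)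
  set C : ℝ := R.toReal with hC
  have hC0 : 0 ≤ C := ENNReal.toReal_nonneg
  set δ : ℝ := (ε/2)/(C+1) with hδ
  have hδ0 : 0 < δ := by positivity
  obtain ⟨T, hTmem, hTd⟩ := Metric.mem_closure_iff.mp hgKmem δ hδ0
  obtain ⟨G, hGspan, hGae⟩ := transfer T hTmem
  refine ⟨G, hGspan, ?_⟩
  have hbound : ∀ᵐ x ∂μ, ‖(⇑(G₀ - G)) x‖ ≤ δ := by
    filter_upwards [Lp.coeFn_sub G₀ G, hgae, hGae,
      ae_restrict_mem hΩo.measurableSet] with x h1 h2 h3 h4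
    rw [h1]
    simp only [Pi.sub_apply]
    rw [h2, h3 (hΩK h4)]
    have : g x = gK ⟨x, hΩK h4⟩ := rfl
    rw [this, ← dist_eq_norm]
    exact (ContinuousMap.dist_apply_le_dist _).trans hTd.le
  have hsn : eLpNorm (⇑(G₀ - G)) 2 μ ≤ R * ENNReal.ofReal δ := by
    rw [hR]
    exact eLpNorm_le_of_ae_bound hbound
  have hnorm : ‖G₀ - G‖ ≤ C * δ := by
    rw [Lp.norm_def]
    calc (eLpNorm (⇑(G₀ - G)) 2 μ).toReal
        ≤ (R * ENNReal.ofReal δ).toReal :=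
          ENNReal.toReal_mono (ENNReal.mul_ne_top hRlt.ne ENNReal.ofReal_ne_top) hsn
      _ = C * δ := by rw [ENNReal.toReal_mul, ENNReal.toReal_ofReal hδ0.le, hC]
  have h1 : C * δ < ε / 2 := by
    have h2 : C * δ = (ε/2) * (C/(C+1)) := by rw [hδ]; ring
    have h3 : C/(C+1) < 1 := (div_lt_one (by positivity)).mpr (lt_add_one C)
    nlinarith
  calc dist F G ≤ dist F G₀ + dist G₀ G := dist_triangle _ _ _
    _ < ε/2 + ε/2 := by
        apply add_lt_add hG₀
        rw [dist_eq_norm]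
        exact lt_of_le_of_lt hnorm h1
    _ = ε := by ring
end
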